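/- Let (x^k)_{k ≥ −1} be a cDCA sequence, and assume h is differentiable with ∇h being L_h-Lipschitz continuous on the convex hull of {x^k : k ≥ −1}. Then for every k ≥ 0 there exists ξ^{k+1} ∈ ∂g(x^{k+1}) such that the pair v^{k+1} := (∇f(x^{k+1}) + ξ^{k+1} − ∇h(x^{k+1}) + 2τ(x^{k+1} − x^k), 2τ(x^k − x^{k+1})) ∈ ℝⁿ × ℝⁿ satisfies ‖v^{k+1}‖ ≤ ((1 − μλ)δ/μ)‖x^k − x^{k−1}‖ + (λ + L_h + 4τ)‖x^{k+1} − x^k‖, where the norm of a pair is bounded by the sum of the Euclidean norms of its two components. -/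

import Mathlib

open Set Filter Topology
open scoped InnerProductSpace

noncomputable section

abbrev Euc (n : ℕ) := EuclideanSpace ℝ (Fin n)

/-- The subdifferential of an extended-real-valued function `g` at `u`. -/
def SubdiffE {n : ℕ} (g : Euc n → EReal) (u : Euc n) : Set (Euc n) :=
  {ξ | ∀ z, g u + ((⟪ξ, z - u⟫_ℝ : ℝ) : EReal) ≤ g z}

/-- The subdifferential of a real-valued function `h` at `u`. -/
def SubdiffR {n : ℕ} (h : Euc n → ℝ) (u : Euc n) : Set (Euc n) :=
  {ξ | ∀ z, h u + ⟪ξ, z - u⟫_ℝ ≤ h z}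

/-- Convexity for extended-real-valued functions. -/
def ConvexEReal {n : ℕ} (g : Euc n → EReal) : Prop :=
  ∀ x y : Euc n, ∀ a b : ℝ, 0 ≤ a → 0 ≤ b → a + b = 1 →
    g (a • x + b • y) ≤ (a : EReal) * g x + (b : EReal) * g y

/-- `g` is proper: nowhere `⊥` and somewhere finite. -/
def ProperE {n : ℕ} (g : Euc n → EReal) : Prop :=
  (∀ x, g x ≠ ⊥) ∧ ∃ x, g x ≠ ⊤

/-- `P` is the proximal mapping of `g`: for every `α > 0` and every `x`, `P α x` is
the unique minimizer over `ℝⁿ` of `y ↦ g y + (1/(2α)) ‖x - y‖²`. -/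
def IsProx {n : ℕ} (g : Euc n → EReal) (P : ℝ → Euc n → Euc n) : Prop :=
  ∀ α : ℝ, 0 < α → ∀ x p, P α x = p ↔
    (∀ y, g p + ((1/(2*α) * ‖x - p‖^2 : ℝ) : EReal) ≤ g y + ((1/(2*α) * ‖x - y‖^2 : ℝ) : EReal))

/-- A cDCA sequence, indexed so that `x 0 = x⁻¹` and `x (k+1) = xᵏ` for `k ≥ 0`:
for every `k ≥ 0` there exist `ηᵏ ∈ ∂h(xᵏ)` and `yᵏ` with
`x^{k+1} = Prox_{μg}((1-μλ)yᵏ - μ∇f(yᵏ) + μλxᵏ + μηᵏ)` and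
`‖x^{k+1} - yᵏ‖ ≤ δ‖x^{k-1} - xᵏ‖`. -/
def IsCDCA {n : ℕ} (f' : Euc n → Euc n) (h : Euc n → ℝ) (P : ℝ → Euc n → Euc n)
    (lam mu δ : ℝ) (x : ℕ → Euc n) : Prop :=
  ∀ k : ℕ, ∃ η ∈ SubdiffR h (x (k+1)), ∃ y,
    x (k+2) = P mu ((1 - mu*lam) • y - mu • f' y + (mu*lam) • x (k+1) + mu • η) ∧
    ‖x (k+2) - y‖ ≤ δ * ‖x k - x (k+1)‖



lemma line_hasDerivAt {n : ℕ} (f : Euc n → ℝ) (f' : Euc n → Euc n)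
    (hf : ∀ z, HasGradientAt f (f' z) z) (a v : Euc n) (t : ℝ) :
    HasDerivAt (fun s : ℝ => f (a + s • v)) ⟪f' (a + t • v), v⟫_ℝ t := by
  have hc : HasDerivAt (fun s : ℝ => a + s • v) v t := by
    simpa using ((hasDerivAt_id t).smul_const v).const_add a
  have := (hasGradientAt_iff_hasFDerivAt.1 (hf (a + t • v))).comp_hasDerivAt t hc
  simpa [InnerProductSpace.toDual_apply_apply, Function.comp_def] using this

lemma convex_first_order {n : ℕ} (f : Euc n → ℝ) (f' : Euc n → Euc n)
    (hconv : ConvexOn ℝ Set.univ f) (hf : ∀ z, HasGradientAt f (f' z) z) (u z : Euc n) :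
    f u + ⟪f' u, z - u⟫_ℝ ≤ f z := by
  set φ : ℝ → ℝ := fun s => f (u + s • (z - u)) with hφ
  have hd : HasDerivAt φ ⟪f' u, z - u⟫_ℝ 0 := by
    simpa using line_hasDerivAt f f' hf u (z - u) 0
  have hslope : Tendsto (slope φ 0) (𝓝[>] 0) (𝓝 ⟪f' u, z - u⟫_ℝ) :=
    ((hasDerivAt_iff_tendsto_slope.1 hd).mono_left
      (nhdsWithin_mono 0 (fun t ht => ne_of_gt ht)))
  have hbound : ∀ᶠ t in 𝓝[>] (0:ℝ), slope φ 0 t ≤ f z - f u := by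
    filter_upwards [Ioo_mem_nhdsGT_of_mem (Set.left_mem_Ico.2 one_pos)] with t ht
    have ht0 : 0 < t := ht.1
    have ht1 : t < 1 := ht.2
    have hcv := hconv.2 (Set.mem_univ u) (Set.mem_univ z) (by linarith : (0:ℝ) ≤ 1 - t)
      ht0.le (by ring)
    have heq : (1 - t) • u + t • z = u + t • (z - u) := by module
    rw [heq] at hcv
    rw [slope_def_field]
    have hineq : φ t ≤ f u + t * (f z - f u) := by
      have := hcv
      simp only [smul_eq_mul] at this
      calc φ t ≤ (1 - t) * f u + t * f z := this
        _ = f u + t * (f z - f u) := by ring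
    have h0 : φ 0 = f u := by simp [φ]
    rw [sub_zero, div_le_iff₀ ht0, h0]
    nlinarith [hineq]
  have := le_of_tendsto hslope hbound
  have h0 : φ 0 = f u := by simp [φ]
  linarith [this]

lemma descent {n : ℕ} (f : Euc n → ℝ) (f' : Euc n → Euc n) (Lf : ℝ) (hLf : 0 < Lf)
    (hf : ∀ z, HasGradientAt f (f' z) z)
    (hflip : ∀ z w, ‖f' z - f' w‖ ≤ Lf * ‖z - w‖) (a b : Euc n) :
    f b ≤ f a + ⟪f' a, b - a⟫_ℝ + Lf / 2 * ‖b - a‖ ^ 2 := by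
  set v := b - a with hv
  set φ : ℝ → ℝ := fun t => f (a + t • v) - ⟪f' a, v⟫_ℝ * t - (Lf / 2 * ‖v‖ ^ 2) * t ^ 2
    with hφ
  have hd : ∀ t : ℝ, HasDerivAt φ
      (⟪f' (a + t • v), v⟫_ℝ - ⟪f' a, v⟫_ℝ - (Lf / 2 * ‖v‖ ^ 2) * (2 * t)) t := by
    intro t
    have h1 := line_hasDerivAt f f' hf a v t
    have h2 : HasDerivAt (fun t : ℝ => ⟪f' a, v⟫_ℝ * t) ⟪f' a, v⟫_ℝ t := by
      simpa using (hasDerivAt_id t).const_mul ⟪f' a, v⟫_ℝ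
    have h3 : HasDerivAt (fun t : ℝ => (Lf / 2 * ‖v‖ ^ 2) * t ^ 2)
        ((Lf / 2 * ‖v‖ ^ 2) * (2 * t)) t := by
      simpa [mul_comm] using (hasDerivAt_pow 2 t).const_mul (Lf / 2 * ‖v‖ ^ 2)
    exact (h1.sub h2).sub h3
  have hanti : AntitoneOn φ (Set.Icc 0 1) := by
    apply antitoneOn_of_deriv_nonpos (convex_Icc 0 1)
    · exact fun t _ => ((hd t).continuousAt).continuousWithinAt
    · intro t ht
      exact ((hd t).differentiableAt).differentiableWithinAt
    · intro t ht
      rw [interior_Icc] at ht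
      rw [(hd t).deriv]
      have hin : ⟪f' (a + t • v) - f' a, v⟫_ℝ ≤ Lf * t * ‖v‖ ^ 2 := by
        calc ⟪f' (a + t • v) - f' a, v⟫_ℝ ≤ ‖f' (a + t • v) - f' a‖ * ‖v‖ :=
              real_inner_le_norm _ _
          _ ≤ (Lf * ‖(a + t • v) - a‖) * ‖v‖ := by
              exact mul_le_mul_of_nonneg_right (hflip _ _) (norm_nonneg _)
          _ = Lf * t * ‖v‖ ^ 2 := by
              rw [add_sub_cancel_left, norm_smul]
              simp [abs_of_pos ht.1]
              ring
      rw [inner_sub_left] at hin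
      nlinarith [hin]
  have h01 := hanti (Set.left_mem_Icc.2 zero_le_one) (Set.right_mem_Icc.2 zero_le_one)
    zero_le_one
  have he1 : φ 1 = f b - ⟪f' a, v⟫_ℝ - (Lf / 2 * ‖v‖ ^ 2) := by
    simp [φ, hv]
  have he0 : φ 0 = f a := by simp [φ]
  rw [he1, he0] at h01
  linarith

lemma cocoercive {n : ℕ} (f : Euc n → ℝ) (f' : Euc n → Euc n) (Lf : ℝ) (hLf : 0 < Lf)
    (hconv : ConvexOn ℝ Set.univ f) (hf : ∀ z, HasGradientAt f (f' z) z)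
    (hflip : ∀ z w, ‖f' z - f' w‖ ≤ Lf * ‖z - w‖) (a b : Euc n) :
    ‖f' a - f' b‖ ^ 2 ≤ Lf * ⟪f' a - f' b, a - b⟫_ℝ := by
  have half : ∀ a b : Euc n, 1 / (2 * Lf) * ‖f' a - f' b‖ ^ 2 ≤
      f a - f b - ⟪f' b, a - b⟫_ℝ := by
    intro a b
    set u := f' a - f' b with hu
    set c := a - (1 / Lf) • u with hc
    have hdes := descent f f' Lf hLf hf hflip a c
    have hcv := convex_first_order f f' hconv hf b c
    have h1 : c - a = -((1 / Lf) • u) := by rw [hc]; abel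
    have h2 : ⟪f' a, c - a⟫_ℝ = -(1 / Lf) * ⟪f' a, u⟫_ℝ := by
      rw [h1, inner_neg_right, real_inner_smul_right]; ring
    have h3 : ‖c - a‖ ^ 2 = (1 / Lf) ^ 2 * ‖u‖ ^ 2 := by
      rw [h1, norm_neg, norm_smul]
      rw [Real.norm_eq_abs, abs_of_pos (by positivity : (0:ℝ) < 1 / Lf)]
      ring
    have h4 : ⟪f' b, c - b⟫_ℝ = ⟪f' b, a - b⟫_ℝ - (1 / Lf) * ⟪f' b, u⟫_ℝ := by
      have : c - b = (a - b) - (1 / Lf) • u := by rw [hc]; abel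
      rw [this, inner_sub_right, real_inner_smul_right]
    rw [h2, h3] at hdes
    rw [h4] at hcv
    have h5 : ⟪f' a, u⟫_ℝ - ⟪f' b, u⟫_ℝ = ‖u‖ ^ 2 := by
      rw [← inner_sub_left, ← hu, real_inner_self_eq_norm_sq]
    have h5' : 1 / Lf * ⟪f' a, u⟫_ℝ - 1 / Lf * ⟪f' b, u⟫_ℝ = 1 / Lf * ‖u‖ ^ 2 := by
      rw [← mul_sub, h5]
    have e1 : Lf / 2 * ((1 / Lf) ^ 2 * ‖u‖ ^ 2) = 1 / (2 * Lf) * ‖u‖ ^ 2 := by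
      field_simp
    have e2 : 1 / Lf * ‖u‖ ^ 2 = 1 / (2 * Lf) * ‖u‖ ^ 2 + 1 / (2 * Lf) * ‖u‖ ^ 2 := by
      field_simp
      ring
    linarith [hdes, hcv, h5', e1, e2]
  have hab := half a b
  have hba := half b a
  have h6 : ⟪f' b, a - b⟫_ℝ + ⟪f' a, b - a⟫_ℝ = -⟪f' a - f' b, a - b⟫_ℝ := by
    rw [inner_sub_left]
    have : (b - a : Euc n) = -(a - b) := by abel
    rw [this, inner_neg_right]
    ring
  have h7 : ‖f' b - f' a‖ = ‖f' a - f' b‖ := norm_sub_rev _ _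
  rw [h7] at hba
  have e3 : 1 / (2 * Lf) * ‖f' a - f' b‖ ^ 2 + 1 / (2 * Lf) * ‖f' a - f' b‖ ^ 2
      = 1 / Lf * ‖f' a - f' b‖ ^ 2 := by
    field_simp
    ring
  have hmain : 1 / Lf * ‖f' a - f' b‖ ^ 2 ≤ ⟪f' a - f' b, a - b⟫_ℝ := by
    linarith [hab, hba, h6, e3]
  have := mul_le_mul_of_nonneg_left hmain hLf.le
  have e4 : Lf * (1 / Lf * ‖f' a - f' b‖ ^ 2) = ‖f' a - f' b‖ ^ 2 := by
    field_simp
  linarith [this, e4]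

lemma key_bound {n : ℕ} (f : Euc n → ℝ) (f' : Euc n → Euc n) (Lf : ℝ) (hLf : 0 < Lf)
    (hconv : ConvexOn ℝ Set.univ f) (hf : ∀ z, HasGradientAt f (f' z) z)
    (hflip : ∀ z w, ‖f' z - f' w‖ ≤ Lf * ‖z - w‖) (a b : Euc n) :
    ‖f' a - f' b - (Lf / 2) • (a - b)‖ ≤ Lf / 2 * ‖a - b‖ := by
  have hco := cocoercive f f' Lf hLf hconv hf hflip a b
  have hsq : ‖f' a - f' b - (Lf / 2) • (a - b)‖ ^ 2 ≤ (Lf / 2 * ‖a - b‖) ^ 2 := by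
    rw [norm_sub_sq_real, real_inner_smul_right, norm_smul, Real.norm_eq_abs,
      abs_of_pos (by positivity : (0:ℝ) < Lf / 2)]
    nlinarith [hco]
  nlinarith [norm_nonneg (f' a - f' b - (Lf / 2) • (a - b)), hsq,
    mul_nonneg (by positivity : (0:ℝ) ≤ Lf / 2) (norm_nonneg (a - b))]

lemma subdiffR_eq_grad {n : ℕ} (h : Euc n → ℝ) (h' : Euc n → Euc n)
    (hhgrad : ∀ z, HasGradientAt h (h' z) z) (u : Euc n) (η : Euc n)
    (hη : η ∈ SubdiffR h u) : η = h' u := by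
  have key : ∀ d : Euc n, ⟪h' u - η, d⟫_ℝ = 0 := by
    intro d
    set ψ : ℝ → ℝ := fun t => h (u + t • d) - ⟪η, d⟫_ℝ * t with hψ
    have hd : HasDerivAt ψ (⟪h' u, d⟫_ℝ - ⟪η, d⟫_ℝ) 0 := by
      have h1 : HasDerivAt (fun t : ℝ => h (u + t • d)) ⟪h' (u + (0:ℝ) • d), d⟫_ℝ 0 :=
        line_hasDerivAt h h' hhgrad u d 0
      have h2 : HasDerivAt (fun t : ℝ => ⟪η, d⟫_ℝ * t) ⟪η, d⟫_ℝ 0 := by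
        simpa using (hasDerivAt_id (0:ℝ)).const_mul ⟪η, d⟫_ℝ
      have := h1.sub h2
      rw [zero_smul, add_zero] at this
      exact this
    have hmin : IsLocalMin ψ 0 := by
      apply Filter.Eventually.of_forall
      intro t
      have hsub := hη (u + t • d)
      have he : (u + t • d) - u = t • d := by abel
      rw [he, real_inner_smul_right] at hsub
      have h0 : ψ 0 = h u := by simp [ψ]
      rw [h0]
      simp only [ψ]
      linarith [hsub]
    have := hmin.hasDerivAt_eq_zero hd
    rw [inner_sub_left]
    linarith [this]
  have hz := key (h' u - η)
  rw [real_inner_self_eq_norm_sq] at hz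
  have hnz : h' u - η = 0 := by
    rw [← norm_eq_zero]
    nlinarith [norm_nonneg (h' u - η), hz]
  have : η = h' u := by
    have := sub_eq_zero.1 hnz
    exact this.symm
  exact this

lemma prox_subgrad {n : ℕ} (g : Euc n → EReal) (hgproper : ProperE g)
    (hgconv : ConvexEReal g) (P : ℝ → Euc n → Euc n) (hP : IsProx g P)
    (α : ℝ) (hα : 0 < α) (w p : Euc n) (hp : P α w = p) :
    (α⁻¹ • (w - p)) ∈ SubdiffE g p := by
  have key := ((hP α hα w p).1 hp)
  -- g p is finite
  obtain ⟨y0, hy0⟩ := hgproper.2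
  have hgpbot := hgproper.1 p
  have hgptop : g p ≠ ⊤ := by
    intro htop
    have hk := key y0
    rw [htop] at hk
    have hl : (⊤ : EReal) + ((1/(2*α) * ‖w - p‖^2 : ℝ) : EReal) = ⊤ :=
      EReal.top_add_of_ne_bot (EReal.coe_ne_bot _)
    rw [hl, top_le_iff] at hk
    have : g y0 = ⊤ := by
      by_contra hne
      have hb := hgproper.1 y0
      lift g y0 to ℝ using ⟨hne, hb⟩ with r hr
      rw [← EReal.coe_add] at hk
      exact (EReal.coe_ne_top _) hk
    exact hy0 this
  lift g p to ℝ using ⟨hgptop, hgpbot⟩ with gp hgp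
  intro z
  by_cases hz : g z = ⊤
  · rw [hz]; exact le_top
  have hzbot := hgproper.1 z
  lift g z to ℝ using ⟨hz, hzbot⟩ with gz hgz
  set ξ := α⁻¹ • (w - p) with hξ
  -- real inequality for each t ∈ (0,1]
  have C0 : (0:ℝ) ≤ 1/(2*α) * ‖z - p‖^2 := by positivity
  have main : ∀ t : ℝ, 0 < t → t ≤ 1 →
      gp + ⟪ξ, z - p⟫_ℝ ≤ gz + t * (1/(2*α) * ‖z - p‖^2) := by
    intro t ht0 ht1
    have hk := key (p + t • (z - p))
    have hcv := hgconv p z (1 - t) t (by linarith) ht0.le (by ring)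
    have heq : (1 - t) • p + t • z = p + t • (z - p) := by module
    rw [heq, ← hgp, ← hgz] at hcv
    have hcv' : g (p + t • (z - p)) ≤ (((1 - t) * gp + t * gz : ℝ) : EReal) := by
      rw [EReal.coe_add, EReal.coe_mul, EReal.coe_mul]
      exact hcv
    have hk2 : ((gp + 1/(2*α) * ‖w - p‖^2 : ℝ) : EReal) ≤
        (((1 - t) * gp + t * gz + 1/(2*α) * ‖w - (p + t • (z - p))‖^2 : ℝ) : EReal) := by
      rw [EReal.coe_add, EReal.coe_add]
      calc ((gp : ℝ) : EReal) + ((1/(2*α) * ‖w - p‖^2 : ℝ) : EReal)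
          ≤ g (p + t • (z - p)) + ((1/(2*α) * ‖w - (p + t • (z - p))‖^2 : ℝ) : EReal) := by
            exact hk
        _ ≤ (((1 - t) * gp + t * gz : ℝ) : EReal) +
              ((1/(2*α) * ‖w - (p + t • (z - p))‖^2 : ℝ) : EReal) :=
            add_le_add_left hcv' _
    rw [EReal.coe_le_coe_iff] at hk2
    -- expand norm
    have hnorm : ‖w - (p + t • (z - p))‖^2
        = ‖w - p‖^2 - 2 * (t * ⟪w - p, z - p⟫_ℝ) + t^2 * ‖z - p‖^2 := by
      have he : w - (p + t • (z - p)) = (w - p) - t • (z - p) := by abel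
      rw [he, norm_sub_sq_real, real_inner_smul_right, norm_smul, Real.norm_eq_abs,
        abs_of_pos ht0]
      ring
    rw [hnorm] at hk2
    have hin : ⟪ξ, z - p⟫_ℝ = α⁻¹ * ⟪w - p, z - p⟫_ℝ := real_inner_smul_left _ _ _
    -- from hk2: t*gp ≤ t*gz + 1/(2α)*(-2t⟪⟫ + t²‖z-p‖²)
    -- divide by t
    have hdiv : gp + α⁻¹ * ⟪w - p, z - p⟫_ℝ ≤ gz + t * (1/(2*α) * ‖z - p‖^2) := by
      have hα' : (0:ℝ) < α := hα
      have e1 : 1/(2*α) * (‖w - p‖^2 - 2 * (t * ⟪w - p, z - p⟫_ℝ) + t^2 * ‖z - p‖^2)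
          = 1/(2*α) * ‖w - p‖^2 - t * (α⁻¹ * ⟪w - p, z - p⟫_ℝ)
            + t * (t * (1/(2*α) * ‖z - p‖^2)) := by
        field_simp
      rw [e1] at hk2
      -- hk2 : gp + c ≤ (1-t)gp + t gz + c - t*(α⁻¹⟪⟫) + t*(t*C)
      have ht2 : t * gp + t * (α⁻¹ * ⟪w - p, z - p⟫_ℝ) ≤ t * gz + t * (t * (1/(2*α) * ‖z - p‖^2)) := by
        nlinarith [hk2]
      have := (mul_le_mul_iff_right₀ ht0).1 (by
        calc t * (gp + α⁻¹ * ⟪w - p, z - p⟫_ℝ) = t * gp + t * (α⁻¹ * ⟪w - p, z - p⟫_ℝ) := by ring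
          _ ≤ t * gz + t * (t * (1/(2*α) * ‖z - p‖^2)) := ht2
          _ = t * (gz + t * (1/(2*α) * ‖z - p‖^2)) := by ring)
      have hmono : t * (1/(2*α) * ‖z - p‖^2) ≤ 1 * (1/(2*α) * ‖z - p‖^2) :=
        mul_le_mul_of_nonneg_right ht1 C0
      linarith [this]
    rw [hin]
    exact hdiv
  -- take t → 0
  have hreal : gp + ⟪ξ, z - p⟫_ℝ ≤ gz := by
    apply le_of_forall_pos_le_add
    intro ε hε
    set C := 1/(2*α) * ‖z - p‖^2 with hC
    set t := min 1 (ε / (C + 1)) with ht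
    have ht0 : 0 < t := lt_min one_pos (by positivity)
    have ht1 : t ≤ 1 := min_le_left _ _
    have htC : t * C ≤ ε := by
      have h1 : t ≤ ε / (C + 1) := min_le_right _ _
      have h2 : t * C ≤ (ε / (C + 1)) * C := mul_le_mul_of_nonneg_right h1 C0
      have h3 : (ε / (C + 1)) * C ≤ ε := by
        rw [div_mul_eq_mul_div, div_le_iff₀ (by positivity : (0:ℝ) < C + 1)]
        nlinarith [C0, hε]
      linarith
    have := main t ht0 ht1
    linarith [this]
  rw [← hgp, ← EReal.coe_add]
  exact EReal.coe_le_coe_iff.2 hreal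

/-- For a cDCA sequence, if `h` is differentiable with `∇h`
`L_h`-Lipschitz on the convex hull of `{xᵏ : k ≥ -1}`, then for every `k ≥ 0` there is
`ξ^{k+1} ∈ ∂g(x^{k+1})` such that the pair
`v^{k+1} = (∇f(x^{k+1}) + ξ^{k+1} - ∇h(x^{k+1}) + 2τ(x^{k+1} - xᵏ), 2τ(xᵏ - x^{k+1}))`
satisfies `‖v^{k+1}‖ ≤ ((1-μλ)δ/μ)‖xᵏ - x^{k-1}‖ + (λ + L_h + 4τ)‖x^{k+1} - xᵏ‖`, the norm
of the pair being bounded by the sum of the Euclidean norms of its two components.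
(Here `x 0 = x⁻¹` and `x (k+1) = xᵏ`.) -/
theorem stmt11 {n : ℕ}
    (f : Euc n → ℝ) (f' : Euc n → Euc n) (Lf : ℝ) (hLf : 0 < Lf)
    (hfconv : ConvexOn ℝ Set.univ f)
    (hfgrad : ∀ z, HasGradientAt f (f' z) z)
    (hflip : ∀ z w, ‖f' z - f' w‖ ≤ Lf * ‖z - w‖)
    (g : Euc n → EReal) (hgproper : ProperE g) (hgconv : ConvexEReal g)
    (hglsc : LowerSemicontinuous g)
    (h : Euc n → ℝ) (hhconv : ConvexOn ℝ Set.univ h)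
    (P : ℝ → Euc n → Euc n) (hP : IsProx g P)
    (lam δ mu tau : ℝ) (hlam : 0 < lam) (hδ : δ ∈ Set.Ioo 0 (2*lam/Lf))
    (hmu : mu = 2/(2*lam + Lf)) (htau : tau = Lf^2 * δ^2 / (8*lam))
    (x : ℕ → Euc n) (hx : IsCDCA f' h P lam mu δ x)
    (h' : Euc n → Euc n) (hhgrad : ∀ z, HasGradientAt h (h' z) z)
    (Lh : ℝ) (hhlip : ∀ a ∈ convexHull ℝ (Set.range x), ∀ b ∈ convexHull ℝ (Set.range x),
      ‖h' a - h' b‖ ≤ Lh * ‖a - b‖) :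
    ∀ k : ℕ, ∃ ξ ∈ SubdiffE g (x (k+2)),
      ‖f' (x (k+2)) + ξ - h' (x (k+2)) + (2*tau) • (x (k+2) - x (k+1))‖ +
        ‖(2*tau) • (x (k+1) - x (k+2))‖ ≤
        ((1 - mu*lam) * δ / mu) * ‖x (k+1) - x k‖ +
          (lam + Lh + 4*tau) * ‖x (k+2) - x (k+1)‖ := by
  intro k
  obtain ⟨η, hη, y, hxk, hyb⟩ := hx k
  have hηeq : η = h' (x (k+1)) := subdiffR_eq_grad h h' hhgrad _ η hη
  have hden : (0:ℝ) < 2*lam + Lf := by linarith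
  have hne : (2*lam + Lf) ≠ 0 := ne_of_gt hden
  have hmu0 : 0 < mu := by rw [hmu]; positivity
  set w := (1 - mu*lam) • y - mu • f' y + (mu*lam) • x (k+1) + mu • η with hw
  have hξmem : (mu⁻¹ • (w - x (k+2))) ∈ SubdiffE g (x (k+2)) :=
    prox_subgrad g hgproper hgconv P hP mu hmu0 w (x (k+2)) hxk.symm
  set ξ := mu⁻¹ • (w - x (k+2)) with hξ
  refine ⟨ξ, hξmem, ?_⟩
  have hV : f' (x (k+2)) + ξ - h' (x (k+2)) + (2*tau) • (x (k+2) - x (k+1))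
      = (f' (x (k+2)) - f' y - (Lf/2) • (x (k+2) - y))
        + lam • (x (k+1) - x (k+2))
        + (h' (x (k+1)) - h' (x (k+2)))
        + (2*tau) • (x (k+2) - x (k+1)) := by
    rw [hξ, hw, hηeq, hmu]
    match_scalars <;> field_simp <;> ring
  have hA : ‖f' (x (k+2)) - f' y - (Lf/2) • (x (k+2) - y)‖ ≤ Lf/2 * ‖x (k+2) - y‖ :=
    key_bound f f' Lf hLf hfconv hfgrad hflip (x (k+2)) y
  have hA2 : Lf/2 * ‖x (k+2) - y‖ ≤ Lf/2 * (δ * ‖x k - x (k+1)‖) :=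
    mul_le_mul_of_nonneg_left hyb (by positivity)
  have hB : ‖lam • (x (k+1) - x (k+2))‖ = lam * ‖x (k+2) - x (k+1)‖ := by
    rw [norm_smul, Real.norm_eq_abs, abs_of_pos hlam, norm_sub_rev]
  have hC : ‖h' (x (k+1)) - h' (x (k+2))‖ ≤ Lh * ‖x (k+2) - x (k+1)‖ := by
    have := hhlip (x (k+1)) (subset_convexHull ℝ _ ⟨k+1, rfl⟩)
      (x (k+2)) (subset_convexHull ℝ _ ⟨k+2, rfl⟩)
    rw [norm_sub_rev (x (k+1))] at this
    exact this
  have htau0 : (0:ℝ) ≤ tau := by rw [htau]; positivity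
  have hD : ‖(2*tau) • (x (k+2) - x (k+1))‖ = 2*tau * ‖x (k+2) - x (k+1)‖ := by
    rw [norm_smul, Real.norm_eq_abs, abs_of_nonneg (by linarith)]
  have hv2 : ‖(2*tau) • (x (k+1) - x (k+2))‖ = 2*tau * ‖x (k+2) - x (k+1)‖ := by
    rw [norm_smul, Real.norm_eq_abs, abs_of_nonneg (by linarith), norm_sub_rev]
  have hcoef : (1 - mu*lam) * δ / mu = Lf/2 * δ := by
    rw [hmu]
    field_simp
    ring
  have htri : ‖f' (x (k+2)) + ξ - h' (x (k+2)) + (2*tau) • (x (k+2) - x (k+1))‖ ≤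
      ‖f' (x (k+2)) - f' y - (Lf/2) • (x (k+2) - y)‖ + ‖lam • (x (k+1) - x (k+2))‖
        + ‖h' (x (k+1)) - h' (x (k+2))‖ + ‖(2*tau) • (x (k+2) - x (k+1))‖ := by
    rw [hV]
    calc ‖_ + _ + _ + _‖ ≤ ‖(f' (x (k+2)) - f' y - (Lf/2) • (x (k+2) - y))
            + lam • (x (k+1) - x (k+2)) + (h' (x (k+1)) - h' (x (k+2)))‖
          + ‖(2*tau) • (x (k+2) - x (k+1))‖ := norm_add_le _ _
      _ ≤ (‖(f' (x (k+2)) - f' y - (Lf/2) • (x (k+2) - y)) + lam • (x (k+1) - x (k+2))‖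
            + ‖h' (x (k+1)) - h' (x (k+2))‖) + ‖(2*tau) • (x (k+2) - x (k+1))‖ := by
          gcongr
          exact norm_add_le _ _
      _ ≤ _ := by
          gcongr
          exact norm_add_le _ _
  rw [hcoef, norm_sub_rev (x (k+1)) (x k), hv2]
  rw [hB, hD] at htri
  linarith [htri, hA, hA2, hC]
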